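/- Let λ ∈ Γ_{k-1}, let G(λ) = σ_k/σ_{k-1} − Σ_{ℓ=0}^{k-2} α_ℓ σ_ℓ/σ_{k-1} with α_ℓ > 0 and set G^{ii} = ∂G/∂λ_i (each nonnegative). Then Σ_i G^{ii}|λ_i| ≥ G(λ) + δ·Σ_{ℓ=0}^{k-2} σ_ℓ/σ_{k-1}, where δ > 0 is any constant with α_ℓ(k−ℓ) ≥ δ for all 0 ≤ ℓ ≤ k−2; here one uses the Euler homogeneity relations Σ_i (σ_k/σ_{k-1})^{ii} λ_i = σ_k/σ_{k-1} and Σ_i (σ_ℓ/σ_{k-1})^{ii} λ_i = −(k−1−ℓ)σ_ℓ/σ_{k-1}. -/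

import Mathlib

/-- The m-th elementary symmetric polynomial of x ∈ ℝⁿ. -/
noncomputable def esymm (n m : ℕ) (x : Fin n → ℝ) : ℝ :=
  ∑ s ∈ Finset.powersetCard m (Finset.univ : Finset (Fin n)), ∏ i ∈ s, x i

/-- The Gårding cone Γ_k = {λ ∈ ℝⁿ : σ_j(λ) > 0 for 1 ≤ j ≤ k}. -/
def Gamma (n k : ℕ) : Set (Fin n → ℝ) :=
  {x | ∀ j : ℕ, 1 ≤ j → j ≤ k → 0 < esymm n j x}

lemma esymm_diff (n m : ℕ) (x : Fin n → ℝ) : DifferentiableAt ℝ (esymm n m) x := by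
  have hp : ∀ s : Finset (Fin n), DifferentiableAt ℝ (fun y : Fin n → ℝ => ∏ i ∈ s, y i) x := by
    intro s
    induction s using Finset.induction with
    | empty => simp only [Finset.prod_empty]; exact differentiableAt_const (1:ℝ)
    | insert _ _ h ih =>
      simp only [Finset.prod_insert h]
      exact (differentiableAt_pi.mp differentiableAt_id _).mul ih
  exact DifferentiableAt.fun_sum fun s _ => hp s

lemma esymm_zero (n : ℕ) (x : Fin n → ℝ) : esymm n 0 x = 1 := by
  simp [esymm]

/-- for λ ∈ Γ_{k-1}, G = σ_k/σ_{k-1} − Σ α_ℓ σ_ℓ/σ_{k-1} with α_ℓ > 0,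
G^{ii} = ∂G/∂λ_i nonnegative, and the Euler homogeneity relations as hypotheses,
one has Σ_i G^{ii}|λ_i| ≥ G(λ) + δ·Σ_ℓ σ_ℓ/σ_{k-1} whenever α_ℓ(k−ℓ) ≥ δ > 0. -/
theorem stmt_17 (n k : ℕ) (hk : 2 ≤ k) (hkn : k ≤ n) (α : ℕ → ℝ)
    (hα : ∀ ℓ, ℓ ≤ k - 2 → 0 < α ℓ) (δ : ℝ) (hδ : 0 < δ)
    (hδα : ∀ ℓ, ℓ ≤ k - 2 → δ ≤ α ℓ * ((k:ℝ) - (ℓ:ℝ)))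
    (x : Fin n → ℝ) (hx : x ∈ Gamma n (k-1))
    (G : (Fin n → ℝ) → ℝ)
    (hG : G = fun y => esymm n k y / esymm n (k-1) y
      - ∑ ℓ ∈ Finset.range (k-1), α ℓ * (esymm n ℓ y / esymm n (k-1) y))
    (hGii : ∀ i : Fin n, 0 ≤ fderiv ℝ G x (Pi.single i 1))
    (hEulerK : ∑ i : Fin n,
        fderiv ℝ (fun y => esymm n k y / esymm n (k-1) y) x (Pi.single i 1) * x i
      = esymm n k x / esymm n (k-1) x)
    (hEulerL : ∀ ℓ : ℕ, ℓ ≤ k - 2 →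
      ∑ i : Fin n,
          fderiv ℝ (fun y => esymm n ℓ y / esymm n (k-1) y) x (Pi.single i 1) * x i
        = -((k:ℝ)-1-(ℓ:ℝ)) * (esymm n ℓ x / esymm n (k-1) x)) :
    G x + δ * ∑ ℓ ∈ Finset.range (k-1), esymm n ℓ x / esymm n (k-1) x
      ≤ ∑ i : Fin n, fderiv ℝ G x (Pi.single i 1) * |x i| := by
  -- notation
  set S := esymm n (k-1) x with hSdef
  have hS : 0 < S := hx (k-1) (by omega) le_rfl
  have hSne : S ≠ 0 := ne_of_gt hS
  -- each quotient is differentiable at x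
  have hdq : ∀ m : ℕ, DifferentiableAt ℝ (fun y => esymm n m y / esymm n (k-1) y) x :=
    fun m => by
      have he : (fun y => esymm n m y / esymm n (k-1) y)
          = fun y : Fin n → ℝ => esymm n m y * (esymm n (k-1) y)⁻¹ := by
        funext y; rw [div_eq_mul_inv]
      rw [he]
      exact (esymm_diff n m x).mul (DifferentiableAt.inv (esymm_diff n (k-1) x) hSne)
  -- nonnegativity of each quotient
  have hq_nonneg : ∀ ℓ ∈ Finset.range (k-1), 0 ≤ esymm n ℓ x / S := by
    intro ℓ hℓ
    rcases Nat.eq_zero_or_pos ℓ with h0 | h1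
    · subst h0; rw [esymm_zero]; positivity
    · have := hx ℓ h1 (by simp at hℓ; omega)
      positivity
  -- linearity of the derivative of G
  have hdsum : DifferentiableAt ℝ
      (fun y => ∑ ℓ ∈ Finset.range (k-1), α ℓ * (esymm n ℓ y / esymm n (k-1) y)) x :=
    DifferentiableAt.fun_sum fun ℓ _ => (hdq ℓ).const_mul (α ℓ)
  have hkey : ∀ v : Fin n → ℝ, fderiv ℝ G x v
      = fderiv ℝ (fun y => esymm n k y / esymm n (k-1) y) x v
        - ∑ ℓ ∈ Finset.range (k-1),
            α ℓ * fderiv ℝ (fun y => esymm n ℓ y / esymm n (k-1) y) x v := by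
    intro v
    rw [hG, fderiv_fun_sub (hdq k) hdsum]
    simp only [ContinuousLinearMap.sub_apply, sub_right_inj]
    rw [fderiv_fun_sum (fun ℓ _ => (hdq ℓ).const_mul (α ℓ))]
    simp only [ContinuousLinearMap.sum_apply]
    apply Finset.sum_congr rfl
    intro ℓ _
    rw [fderiv_const_mul (hdq ℓ)]
    simp
  -- Step 1: Σ G^{ii} x_i ≤ Σ G^{ii} |x_i|
  have step1 : ∑ i : Fin n, fderiv ℝ G x (Pi.single i 1) * x i
      ≤ ∑ i : Fin n, fderiv ℝ G x (Pi.single i 1) * |x i| :=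
    Finset.sum_le_sum fun i _ => mul_le_mul_of_nonneg_left (le_abs_self _) (hGii i)
  refine le_trans ?_ step1
  -- Step 2: compute Σ G^{ii} x_i
  have step2 : ∑ i : Fin n, fderiv ℝ G x (Pi.single i 1) * x i
      = esymm n k x / S
        + ∑ ℓ ∈ Finset.range (k-1), α ℓ * ((k:ℝ)-1-(ℓ:ℝ)) * (esymm n ℓ x / S) := by
    simp only [hkey, sub_mul, Finset.sum_mul, Finset.sum_sub_distrib]
    rw [hEulerK, Finset.sum_comm]
    have hterm : ∀ ℓ ∈ Finset.range (k-1),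
        (∑ i : Fin n, α ℓ * fderiv ℝ (fun y => esymm n ℓ y / esymm n (k-1) y) x
          (Pi.single i 1) * x i)
        = -(α ℓ * ((k:ℝ)-1-(ℓ:ℝ)) * (esymm n ℓ x / S)) := by
      intro ℓ hℓ
      have hℓ' : ℓ ≤ k - 2 := by simp only [Finset.mem_range] at hℓ; omega
      have h1 : (∑ i : Fin n, α ℓ * fderiv ℝ (fun y => esymm n ℓ y / esymm n (k-1) y) x
          (Pi.single i 1) * x i)
          = α ℓ * ∑ i : Fin n, fderiv ℝ (fun y => esymm n ℓ y / esymm n (k-1) y) x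
          (Pi.single i 1) * x i := by
        rw [Finset.mul_sum]
        exact Finset.sum_congr rfl fun i _ => by ring
      rw [h1, hEulerL ℓ hℓ']
      ring
    rw [Finset.sum_congr rfl hterm, Finset.sum_neg_distrib, sub_neg_eq_add]
  rw [step2, hG]
  simp only []
  rw [add_comm (esymm n k x / S)]
  have : ∑ ℓ ∈ Finset.range (k-1), α ℓ * (esymm n ℓ x / S)
      + ∑ ℓ ∈ Finset.range (k-1), α ℓ * ((k:ℝ)-1-(ℓ:ℝ)) * (esymm n ℓ x / S)
      = ∑ ℓ ∈ Finset.range (k-1), α ℓ * ((k:ℝ)-(ℓ:ℝ)) * (esymm n ℓ x / S) := by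
    rw [← Finset.sum_add_distrib]
    exact Finset.sum_congr rfl fun ℓ _ => by ring
  have hmain : δ * ∑ ℓ ∈ Finset.range (k-1), esymm n ℓ x / S
      ≤ ∑ ℓ ∈ Finset.range (k-1), α ℓ * ((k:ℝ)-(ℓ:ℝ)) * (esymm n ℓ x / S) := by
    rw [Finset.mul_sum]
    apply Finset.sum_le_sum
    intro ℓ hℓ
    have hℓ' : ℓ ≤ k - 2 := by simp at hℓ; omega
    exact mul_le_mul_of_nonneg_right (hδα ℓ hℓ') (hq_nonneg ℓ hℓ)
  linarith
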